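/- Let λ, T, g_s, g_v be positive real numbers with λ·g_v² < 4·g_s and T < g_v/g_s. Consider the complex 2×2 matrix Q with rows (1, T) and (−λ·T·g_s, 1 − λ·T·g_v). Then every eigenvalue s ∈ ℂ of Q satisfies |s| < 1 (i.e., Q is Schur stable). -/

import Mathlib

/-- Spectral claim of Theorem 2: under `λg_v² < 4g_s` and `T < g_v/g_s`, all
eigenvalues of `Q = [[1, T], [−λTg_s, 1 − λTg_v]]` lie in the open unit disk. -/
theorem closed_loop_schur_stable
    (lam T gs gv : ℝ) (hlam : 0 < lam) (hT : 0 < T) (hgs : 0 < gs) (hgv : 0 < gv)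
    (h1 : lam * gv ^ 2 < 4 * gs) (h2 : T < gv / gs)
    (Q : Matrix (Fin 2) (Fin 2) ℂ)
    (hQ : Q = !![1, (T : ℂ); -((lam : ℂ) * T * gs), 1 - (lam : ℂ) * T * gv]) :
    ∀ s ∈ spectrum ℂ Q, ‖s‖ < 1 := by
  intro s hs
  rw [spectrum.mem_iff] at hs
  have hdet : Matrix.det (algebraMap ℂ (Matrix (Fin 2) (Fin 2) ℂ) s - Q) = 0 := by
    by_contra h
    exact hs ((Matrix.isUnit_iff_isUnit_det _).mpr (isUnit_iff_ne_zero.mpr h))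
  rw [hQ, Algebra.algebraMap_eq_smul_one, Matrix.det_fin_two] at hdet
  simp [Matrix.sub_apply, Matrix.smul_apply, Matrix.one_apply] at hdet
  rw [lt_div_iff₀ hgs] at h2
  set x := s.re with hxdef
  set y := s.im with hydef
  have hre := congrArg Complex.re hdet
  have him := congrArg Complex.im hdet
  simp [Complex.mul_re, Complex.mul_im, Complex.sub_re, Complex.sub_im,
    Complex.add_re, Complex.add_im, Complex.one_re, Complex.one_im,
    Complex.ofReal_re, Complex.ofReal_im] at hre him
  have hfac : y * (2 * x - (2 - lam * T * gv)) = 0 := by linear_combination him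
  have key : x ^ 2 + y ^ 2 < 1 := by
    rcases mul_eq_zero.mp hfac with hy | hx
    · exfalso
      nlinarith [sq_nonneg (2 * x - (2 - lam * T * gv)), hre,
        mul_pos (mul_pos hlam (mul_pos hT hT)) (by linarith : (0:ℝ) < 4 * gs - lam * gv ^ 2)]
    · have heq : x ^ 2 + y ^ 2 = 1 - lam * T * gv + lam * T ^ 2 * gs := by
        linear_combination -hre + x * hx
      nlinarith [mul_pos (mul_pos hlam hT) (by linarith : (0:ℝ) < gv - T * gs)]
  have habs : ‖s‖ ^ 2 = x ^ 2 + y ^ 2 := by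
    rw [Complex.sq_norm, Complex.normSq_apply]; ring
  nlinarith [norm_nonneg s, habs]
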